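/- Suppose a group G acts geometrically on a CAT(0) space X. Then for every g ∈ G the fixed-point set ℱ_g = {α ∈ ∂X : gα = α} of g on the boundary equals the limit set L(Z_g) of the centralizer Z_g of g. Moreover, ℱ_g = ∅ if and only if Z_g is finite. -/

import Mathlib

open Metric Set Filter Pointwise

/-- A unit-speed geodesic segment from `x` to `y`, parametrized on `[0, dist x y]`. -/
def IsGeodesicFromTo {X : Type*} [MetricSpace X] (f : ℝ → X) (x y : X) : Prop :=
  f 0 = x ∧ f (dist x y) = y ∧
    ∀ s ∈ Set.Icc (0 : ℝ) (dist x y), ∀ t ∈ Set.Icc (0 : ℝ) (dist x y),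
      dist (f s) (f t) = |s - t|

/-- A geodesic metric space: any two points are joined by a geodesic segment. -/
def IsGeodesicSpace (X : Type*) [MetricSpace X] : Prop :=
  ∀ x y : X, ∃ f : ℝ → X, IsGeodesicFromTo f x y

/-- A CAT(0) space: a geodesic space all of whose geodesic triangles satisfy the CAT(0)
comparison inequality (stated here in its standard equivalent form: the comparison
inequality for a point `z` and a point on a geodesic from `x` to `y`). -/
def IsCAT0Space (X : Type*) [MetricSpace X] : Prop :=
  IsGeodesicSpace X ∧
    ∀ (x y z : X) (f : ℝ → X), IsGeodesicFromTo f x y →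
      ∀ t ∈ Set.Icc (0 : ℝ) 1,
        dist z (f (t * dist x y)) ^ 2 ≤
          (1 - t) * dist z x ^ 2 + t * dist z y ^ 2 - t * (1 - t) * dist x y ^ 2

/-- A subset `C` is (geodesically) convex: every geodesic segment between points of `C`
lies in `C`. -/
def GeodesicConvex {X : Type*} [MetricSpace X] (C : Set X) : Prop :=
  ∀ x ∈ C, ∀ y ∈ C, ∀ f : ℝ → X, IsGeodesicFromTo f x y →
    ∀ t ∈ Set.Icc (0 : ℝ) (dist x y), f t ∈ C

/-- A geometric action: an action by isometries which is proper and cocompact. -/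
structure IsGeometricAction (G X : Type*) [Group G] [MetricSpace X] [MulAction G X] : Prop where
  isometry : ∀ g : G, Isometry (fun x : X => g • x)
  proper : ∀ K : Set X, IsCompact K →
    {g : G | ((fun x : X => g • x) '' K ∩ K).Nonempty}.Finite
  cocompact : ∃ K : Set X, IsCompact K ∧ ⋃ g : G, (fun x : X => g • x) '' K = Set.univ

/-- A unit-speed geodesic ray starting at `x0`. -/
def IsGeodesicRayFrom {X : Type*} [MetricSpace X] (x0 : X) (ξ : ℝ → X) : Prop :=
  ξ 0 = x0 ∧ ∀ s t : ℝ, 0 ≤ s → 0 ≤ t → dist (ξ s) (ξ t) = |s - t|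

/-- The boundary of a proper CAT(0) space, modelled as the set of geodesic rays emanating
from the basepoint `x0`; the cone topology coincides with the topology of pointwise
convergence of rays (as a subspace of `ℝ → X` with the product topology). -/
abbrev Boundary (X : Type*) [MetricSpace X] (x0 : X) : Type _ :=
  {ξ : ℝ → X // IsGeodesicRayFrom x0 ξ}

/-- Two maps `ℝ → X` are asymptotic if they are at bounded distance on `[0, ∞)`. -/
def AsymptoticMaps {X : Type*} [MetricSpace X] (f g : ℝ → X) : Prop :=
  ∃ C : ℝ, ∀ t : ℝ, 0 ≤ t → dist (f t) (g t) ≤ C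

/-- The image `Im ξ` of a geodesic ray `ξ` (on `[0, ∞)`). -/
def rayImage {X : Type*} [MetricSpace X] {x0 : X} (ξ : Boundary X x0) : Set X :=
  ξ.1 '' Set.Ici (0 : ℝ)

/-- A sequence of points of `X` converges, in the cone topology on `X ∪ ∂X`, to the
boundary point `β`: the distances from the basepoint tend to infinity, and the geodesic
segments from the basepoint to the points of the sequence converge pointwise to the ray
representing `β`. -/
def TendstoBoundary {X : Type*} [MetricSpace X] (x0 : X) (x : ℕ → X) (β : Boundary X x0) : Prop :=
  Tendsto (fun n => dist x0 (x n)) atTop atTop ∧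
    ∀ f : ℕ → ℝ → X, (∀ n, IsGeodesicFromTo (f n) x0 (x n)) →
      ∀ t : ℝ, 0 ≤ t →
        Tendsto (fun n => f n (min t (dist x0 (x n)))) atTop (nhds (β.1 t))

section M1

variable {X : Type*} [MetricSpace X]

lemma geodesic_dist_left {f : ℝ → X} {x y : X} (hf : IsGeodesicFromTo f x y)
    {s : ℝ} (hs : s ∈ Set.Icc (0 : ℝ) (dist x y)) : dist x (f s) = s := by
  have h := hf.2.2 0 ⟨le_refl 0, dist_nonneg⟩ s hs
  rw [hf.1] at h
  rw [h, abs_of_nonpos (by linarith [hs.1])]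
  ring

lemma geodesic_dist_right {f : ℝ → X} {x y : X} (hf : IsGeodesicFromTo f x y)
    {s : ℝ} (hs : s ∈ Set.Icc (0 : ℝ) (dist x y)) : dist (f s) y = dist x y - s := by
  have h := hf.2.2 s hs (dist x y) ⟨dist_nonneg, le_refl _⟩
  rw [hf.2.1] at h
  rw [h, abs_of_nonpos (by linarith [hs.2])]
  ring


lemma le_of_sq_le_sq'' {a b : ℝ} (h : a^2 ≤ b^2) (ha : 0 ≤ a) (hb : 0 ≤ b) : a ≤ b := by
  nlinarith

/-- one-endpoint convexity -/
lemma cat0_dist_le (hCAT : IsCAT0Space X) {x y z : X} {f : ℝ → X}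
    (hf : IsGeodesicFromTo f x y) {t : ℝ} (ht : t ∈ Set.Icc (0:ℝ) 1) :
    dist z (f (t * dist x y)) ≤ (1 - t) * dist z x + t * dist z y := by
  have h := hCAT.2 x y z f hf t ht
  have h1 : dist z x ≤ dist z y + dist x y := by
    have := dist_triangle z y x
    rw [dist_comm y x] at this; linarith
  have h2 : dist z y ≤ dist z x + dist x y := dist_triangle z x y
  have hrhs : 0 ≤ (1 - t) * dist z x + t * dist z y := by
    have := dist_nonneg (x := z) (y := x); have := dist_nonneg (x := z) (y := y)
    nlinarith [ht.1, ht.2]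
  refine le_of_sq_le_sq'' ?_ dist_nonneg hrhs
  rw [Set.mem_Icc] at ht
  have hp1 : (0:ℝ) ≤ dist z y + dist x y - dist z x := by linarith
  have hp2 : (0:ℝ) ≤ dist z x + dist x y - dist z y := by linarith
  nlinarith [h, mul_nonneg (mul_nonneg ht.1 (by linarith : (0:ℝ) ≤ 1 - t))
    (mul_nonneg hp1 hp2)]

/-- convexity for geodesics with the same start point -/
lemma cat0_convex_same_start (hCAT : IsCAT0Space X) {x y y' : X} {f h : ℝ → X}
    (hf : IsGeodesicFromTo f x y) (hh : IsGeodesicFromTo h x y')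
    {t : ℝ} (ht : t ∈ Set.Icc (0:ℝ) 1) :
    dist (f (t * dist x y)) (h (t * dist x y')) ≤ t * dist y y' := by
  set z := h (t * dist x y') with hz
  have hmem : t * dist x y' ∈ Set.Icc (0:ℝ) (dist x y') := by
    rw [Set.mem_Icc]
    refine ⟨mul_nonneg ht.1 dist_nonneg, ?_⟩
    nlinarith [ht.2, dist_nonneg (x := x) (y := y')]
  have hzx : dist z x = t * dist x y' := by
    rw [dist_comm]; exact geodesic_dist_left hh hmem
  have h1 := hCAT.2 x y z f hf t ht
  have h2 := hCAT.2 x y' y h hh t ht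
  rw [dist_comm y x] at h2
  rw [hzx, dist_comm z y] at h1
  rw [dist_comm (f (t * dist x y)) z]
  have hB : dist y (h (t * dist x y')) = dist y z := by rw [hz]
  rw [hB] at h2
  refine le_of_sq_le_sq'' ?_ dist_nonneg (mul_nonneg ht.1 dist_nonneg)
  nlinarith [h1, mul_le_mul_of_nonneg_left h2 ht.1, ht.1, ht.2,
    dist_nonneg (x := x) (y := y'), sq_nonneg (dist x y')]

lemma IsGeodesicFromTo.symm {f : ℝ → X} {x y : X} (hf : IsGeodesicFromTo f x y) :
    IsGeodesicFromTo (fun s => f (dist x y - s)) y x := by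
  have hd : dist y x = dist x y := dist_comm y x
  refine ⟨?_, ?_, ?_⟩
  · simp only [sub_zero]; exact hf.2.1
  · simp only [hd, sub_self]; exact hf.1
  · intro s hs t ht
    rw [hd, Set.mem_Icc] at hs ht
    have h1 : dist x y - s ∈ Set.Icc (0:ℝ) (dist x y) := by
      rw [Set.mem_Icc]; constructor <;> linarith [hs.1, hs.2]
    have h2 : dist x y - t ∈ Set.Icc (0:ℝ) (dist x y) := by
      rw [Set.mem_Icc]; constructor <;> linarith [ht.1, ht.2]
    have := hf.2.2 (dist x y - s) h1 (dist x y - t) h2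
    simp only []
    rw [this, show dist x y - s - (dist x y - t) = -(s - t) by ring, abs_neg]

/-- convexity for geodesics with the same end point -/
lemma cat0_convex_same_end (hCAT : IsCAT0Space X) {x x' y : X} {f h : ℝ → X}
    (hf : IsGeodesicFromTo f x y) (hh : IsGeodesicFromTo h x' y)
    {t : ℝ} (ht : t ∈ Set.Icc (0:ℝ) 1) :
    dist (f (t * dist x y)) (h (t * dist x' y)) ≤ (1 - t) * dist x x' := by
  have htm : (1 - t) ∈ Set.Icc (0:ℝ) 1 := by
    rw [Set.mem_Icc] at ht ⊢; constructor <;> linarith [ht.1, ht.2]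
  have h1 := cat0_convex_same_start hCAT hf.symm hh.symm (t := 1 - t) htm
  simp only [dist_comm y x, dist_comm y x'] at h1
  rw [show dist x y - (1 - t) * dist x y = t * dist x y from by ring,
      show dist x' y - (1 - t) * dist x' y = t * dist x' y from by ring] at h1
  exact h1

/-- general convexity of the metric -/
lemma cat0_convex (hCAT : IsCAT0Space X) {x y x' y' : X} {f h : ℝ → X}
    (hf : IsGeodesicFromTo f x y) (hh : IsGeodesicFromTo h x' y')
    {t : ℝ} (ht : t ∈ Set.Icc (0:ℝ) 1) :
    dist (f (t * dist x y)) (h (t * dist x' y')) ≤ (1 - t) * dist x x' + t * dist y y' := by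
  obtain ⟨k, hk⟩ := hCAT.1 x y'
  have h1 := cat0_convex_same_start hCAT hf hk ht
  have h2 := cat0_convex_same_end hCAT hk hh ht
  calc dist (f (t * dist x y)) (h (t * dist x' y'))
      ≤ dist (f (t * dist x y)) (k (t * dist x y')) +
        dist (k (t * dist x y')) (h (t * dist x' y')) := dist_triangle _ _ _
    _ ≤ t * dist y y' + (1 - t) * dist x x' := add_le_add h1 h2
    _ = (1 - t) * dist x x' + t * dist y y' := by ring

/-- equal-length two-geodesic comparison at equal parameter, with a common bound -/
lemma cat0_convex' (hCAT : IsCAT0Space X) {x y x' y' : X} {f h : ℝ → X} {C : ℝ}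
    (hf : IsGeodesicFromTo f x y) (hh : IsGeodesicFromTo h x' y')
    (hL : dist x' y' = dist x y) {s : ℝ} (hs : s ∈ Set.Icc (0:ℝ) (dist x y))
    (hb : dist x x' ≤ C) (hb' : dist y y' ≤ C) :
    dist (f s) (h s) ≤ C := by
  rw [Set.mem_Icc] at hs
  rcases eq_or_lt_of_le (dist_nonneg (x := x) (y := y)) with hL0 | hL0
  · have hs0 : s = 0 := le_antisymm (hs.2.trans_eq hL0.symm) hs.1
    subst hs0
    rw [hf.1, hh.1]; exact hb
  · set t := s / dist x y with htdef
    have ht : t ∈ Set.Icc (0:ℝ) 1 := by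
      rw [Set.mem_Icc]
      exact ⟨div_nonneg hs.1 (le_of_lt hL0), (div_le_one hL0).2 hs.2⟩
    have hts : t * dist x y = s := div_mul_cancel₀ s (ne_of_gt hL0)
    have hts' : t * dist x' y' = s := by rw [hL]; exact hts
    have hconv := cat0_convex hCAT hf hh ht
    rw [hts, hts'] at hconv
    have hC : 0 ≤ C := le_trans dist_nonneg hb
    rw [Set.mem_Icc] at ht
    calc dist (f s) (h s) ≤ (1 - t) * dist x x' + t * dist y y' := hconv
      _ ≤ (1 - t) * C + t * C :=
          add_le_add (mul_le_mul_of_nonneg_left hb (by linarith [ht.2]))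
            (mul_le_mul_of_nonneg_left hb' ht.1)
      _ = C := by ring

/-- uniqueness of geodesics in CAT(0) -/
lemma cat0_geodesic_unique (hCAT : IsCAT0Space X) {x y : X} {f h : ℝ → X}
    (hf : IsGeodesicFromTo f x y) (hh : IsGeodesicFromTo h x y)
    {s : ℝ} (hs : s ∈ Set.Icc (0:ℝ) (dist x y)) : f s = h s := by
  have hle := cat0_convex' hCAT hf hh rfl hs (C := 0) (by simp) (by simp)
  exact dist_eq_zero.1 (le_antisymm hle dist_nonneg)

lemma exists_midpoint (hgeo : IsGeodesicSpace X) (a b : X) :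
    ∃ m : X, dist a m = dist a b / 2 ∧ dist m b = dist a b / 2 := by
  obtain ⟨f, hf⟩ := hgeo a b
  have hmem : dist a b / 2 ∈ Set.Icc (0:ℝ) (dist a b) := by
    rw [Set.mem_Icc]
    exact ⟨by positivity, by linarith [dist_nonneg (x := a) (y := b)]⟩
  exact ⟨f (dist a b / 2), geodesic_dist_left hf hmem, by
    rw [geodesic_dist_right hf hmem]; ring⟩

end M1

section M2
variable {β : Type*}

lemma exists_strictMono_mem {s : Set ℕ} (hs : s.Infinite) :
    ∃ e : ℕ → ℕ, StrictMono e ∧ ∀ n, e n ∈ s := by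
  have key : ∀ N : ℕ, ∃ m, m ∈ s ∧ N < m := by
    intro N; obtain ⟨m, hm, hlt⟩ := hs.exists_gt N; exact ⟨m, hm, hlt⟩
  choose f hf1 hf2 using key
  obtain ⟨n0, hn0⟩ := hs.nonempty
  refine ⟨fun n => Nat.rec n0 (fun _ prev => f prev) n,
    strictMono_nat_of_lt_succ (fun n => hf2 _), ?_⟩
  intro n
  induction n with
  | zero => exact hn0
  | succ k _ => exact hf1 _

lemma exists_injOn_subseq (c : ℕ → β) (h : ∀ b, {n | c n = b}.Finite) :
    ∃ ψ : ℕ → ℕ, StrictMono ψ ∧ Function.Injective (c ∘ ψ) := by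
  classical
  have key : ∀ N : ℕ, ∃ n, N < n ∧ ∀ m ≤ N, c n ≠ c m := by
    intro N
    have hbad : ({n | ∃ m ≤ N, c n = c m} ∪ Set.Iic N).Finite := by
      refine Set.Finite.union ?_ (Set.finite_Iic N)
      refine Set.Finite.subset ((Set.finite_Iic N).biUnion (fun m _ => h (c m))) ?_
      rintro n ⟨m, hm, he⟩
      exact Set.mem_biUnion hm he
    obtain ⟨n, hn⟩ := hbad.infinite_compl.nonempty
    simp only [Set.mem_compl_iff, Set.mem_union, Set.mem_setOf_eq, Set.mem_Iic, not_or,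
      not_exists, not_and, not_le] at hn
    exact ⟨n, hn.2, hn.1⟩
  choose f hf1 hf2 using key
  set ψ : ℕ → ℕ := fun n => Nat.rec 0 (fun _ prev => f prev) n with hψ
  have hψs : ∀ n, ψ (n+1) = f (ψ n) := fun n => rfl
  have hmono : StrictMono ψ := strictMono_nat_of_lt_succ (fun n => by rw [hψs]; exact hf1 _)
  refine ⟨ψ, hmono, ?_⟩
  have hne : ∀ j k, j < k → c (ψ k) ≠ c (ψ j) := by
    intro j k hjk
    obtain ⟨k', rfl⟩ := Nat.exists_eq_add_of_lt hjk
    have : ψ j ≤ ψ (j + k') := hmono.monotone (Nat.le_add_right _ _)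
    rw [show j + k' + 1 = (j + k') + 1 by ring, hψs]
    exact hf2 (ψ (j + k')) (ψ j) this
  intro a b hab
  by_contra hne'
  rcases lt_or_gt_of_ne hne' with hlt | hlt
  · exact hne a b hlt hab.symm
  · exact hne b a hlt hab

lemma pigeonhole_subseq (c : ℕ → β) :
    (∃ b, {n | c n = b}.Infinite) ∨ ∃ ψ : ℕ → ℕ, StrictMono ψ ∧ Function.Injective (c ∘ ψ) := by
  by_cases h : ∃ b, {n | c n = b}.Infinite
  · exact Or.inl h
  · push_neg at h
    exact Or.inr (exists_injOn_subseq c (fun b => h b))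

lemma exists_infinite_fiber_of_finite (c : ℕ → β) {s : Set β} (hs : s.Finite)
    (hc : ∀ n, c n ∈ s) : ∃ b, {n | c n = b}.Infinite := by
  by_contra h
  push_neg at h
  have hsub : (Set.univ : Set ℕ) ⊆ ⋃ b ∈ s, {n | c n = b} :=
    fun n _ => Set.mem_biUnion (hc n) rfl
  exact Set.infinite_univ
    (Set.Finite.subset (hs.biUnion (fun b _ => h b)) hsub)

lemma exists_injective_seq_mem (T : ℕ → Set β) (hT : ∀ n, (T n).Infinite) :
    ∃ u : ℕ → β, Function.Injective u ∧ ∀ n, u n ∈ T n := by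
  classical
  have hpick : ∀ (n : ℕ) (l : List β), (T n \ {x | x ∈ l}).Nonempty :=
    fun n l => ((hT n).diff l.finite_toSet).nonempty
  set pick : ℕ → List β → β := fun n l => (hpick n l).some with hpickdef
  have pick_spec : ∀ n l, pick n l ∈ T n \ {x | x ∈ l} := fun n l => (hpick n l).some_mem
  set F : ℕ → List β := fun n => Nat.rec [] (fun k l => l ++ [pick k l]) n with hFdef
  have hF : ∀ n, F (n+1) = F n ++ [pick n (F n)] := fun n => rfl
  set u : ℕ → β := fun n => pick n (F n) with hudef
  have humem : ∀ k n, k < n → u k ∈ F n := by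
    intro k n hkn
    induction n with
    | zero => omega
    | succ m ih =>
      rw [hF]
      rcases Nat.lt_succ_iff_lt_or_eq.1 hkn with hc | hc
      · exact List.mem_append_left _ (ih hc)
      · subst hc; exact List.mem_append_right _ (List.mem_singleton_self _)
  refine ⟨u, ?_, fun n => (pick_spec n (F n)).1⟩
  intro a b hab
  by_contra hne
  rcases Nat.lt_or_ge a b with hc | hc
  · exact (pick_spec b (F b)).2 (show u b ∈ {x | x ∈ F b} from hab ▸ humem a b hc)
  · have hc' : b < a := by omega
    exact (pick_spec a (F a)).2 (show u a ∈ {x | x ∈ F a} from hab.symm ▸ humem b a hc')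

end M2

section M3
variable {G X : Type*} [Group G] [MetricSpace X] [MulAction G X]

lemma dist_smul_eq (hGA : IsGeometricAction G X) (g : G) (x y : X) :
    dist (g • x) (g • y) = dist x y := (hGA.isometry g).dist_eq x y

lemma trans_finite (hGA : IsGeometricAction G X) {C : Set X} (hC : IsCompact C) :
    {u : G | ∃ x ∈ C, u • x ∈ C}.Finite := by
  refine (hGA.proper C hC).subset ?_
  rintro u ⟨x, hx, hux⟩
  exact ⟨u • x, Set.mem_inter (Set.mem_image_of_mem _ hx) hux⟩

lemma stab_finite (hGA : IsGeometricAction G X) (w : X) : {u : G | u • w = w}.Finite :=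
  (trans_finite hGA isCompact_singleton).subset
    (fun u hu => ⟨w, rfl, by rw [Set.mem_setOf_eq] at hu; rw [hu]; exact Set.mem_singleton w⟩)

lemma stab_contra (hGA : IsGeometricAction G X) {w : X} {v : ℕ → G}
    (hvinj : Function.Injective v) (hfix : ∀ k, v k • w = v 0 • w) : False := by
  have hstab : ∀ k : ℕ, ((v 0)⁻¹ * v (k+1)) • w = w := by
    intro k
    rw [mul_smul, hfix (k+1), inv_smul_smul]
  have hinj2 : Function.Injective (fun k : ℕ => (v 0)⁻¹ * v (k+1)) := by
    intro a b hab
    simp only [mul_right_inj] at hab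
    exact Nat.succ_injective (hvinj hab)
  exact Set.not_infinite.2 (stab_finite hGA w)
    (Set.infinite_of_injective_forall_mem hinj2 (fun k => hstab k))

lemma not_inj_tendsto_orbit (hGA : IsGeometricAction G X) {u : ℕ → G}
    (hinj : Function.Injective u) {w : X}
    (hlim : Filter.Tendsto (fun n => u n • w) Filter.atTop (nhds w)) : False := by
  have hC : IsCompact (insert w (Set.range fun n => u n • w)) := hlim.isCompact_insert_range
  have hsub : Set.range u ⊆ {v : G | ∃ x ∈ insert w (Set.range fun n => u n • w),
      v • x ∈ insert w (Set.range fun n => u n • w)} := by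
    rintro v ⟨n, rfl⟩
    exact ⟨w, Set.mem_insert _ _, Set.mem_insert_of_mem _ ⟨n, rfl⟩⟩
  exact Set.not_infinite.2 ((trans_finite hGA hC).subset hsub)
    (Set.infinite_range_of_injective hinj)

structure LevelData (G X : Type*) [Group G] [MetricSpace X] [MulAction G X]
    (K₀ : Set X) where
  y : X
  q : X
  R : ℝ
  h : ℕ → G
  hy : y ∈ K₀
  hball : ∀ n, dist (h n • y) q ≤ R
  hinj : Function.Injective (fun n => h n • y)

lemma LevelData.R_nonneg {K₀ : Set X} (L : LevelData G X K₀) : 0 ≤ L.R :=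
  le_trans dist_nonneg (L.hball 0)

lemma LevelData.hinj' {K₀ : Set X} (L : LevelData G X K₀) : Function.Injective L.h :=
  fun a b hab => L.hinj (show L.h a • L.y = L.h b • L.y from by rw [hab])

lemma LevelData.V_infinite (hGA : IsGeometricAction G X) {K₀ : Set X}
    (L : LevelData G X K₀) :
    {u : G | u ≠ 1 ∧ dist (u • L.y) L.y ≤ 2 * L.R}.Infinite := by
  apply Set.infinite_of_injective_forall_mem
    (f := fun n : ℕ => (L.h 0)⁻¹ * L.h (n+1))
  · intro a b hab
    simp only [mul_right_inj] at hab
    exact Nat.succ_injective (L.hinj' hab)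
  · intro n
    constructor
    · intro hone
      exact Nat.succ_ne_zero n (L.hinj' (inv_mul_eq_one.1 hone).symm)
    · have hsm : ((L.h 0)⁻¹ * L.h (n+1)) • L.y = (L.h 0)⁻¹ • (L.h (n+1) • L.y) := mul_smul _ _ _
      rw [hsm]
      have hiso : dist ((L.h 0)⁻¹ • (L.h (n+1) • L.y)) L.y
          = dist (L.h (n+1) • L.y) (L.h 0 • L.y) := by
        rw [← dist_smul_eq hGA (L.h 0) ((L.h 0)⁻¹ • (L.h (n+1) • L.y)) L.y, smul_inv_smul]
      rw [hiso]
      calc dist (L.h (n+1) • L.y) (L.h 0 • L.y)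
          ≤ dist (L.h (n+1) • L.y) L.q + dist L.q (L.h 0 • L.y) := dist_triangle _ _ _
        _ ≤ 2 * L.R := by
            have h1 := L.hball (n+1)
            have h2 := L.hball 0
            rw [dist_comm] at h2
            linarith

lemma LevelData.step (hGA : IsGeometricAction G X) (hgeo : IsGeodesicSpace X)
    {K₀ : Set X} (hK₀c : IsCompact K₀)
    (hcov : ∀ x : X, ∃ c : G, ∃ κ ∈ K₀, x = c • κ)
    (L : LevelData G X K₀) {ξ : ℝ} (hξ : 0 < ξ) :
    ∃ L' : LevelData G X K₀, L'.R = L.R / 2 + ξ := by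
  classical
  have hmid : ∀ n : ℕ, ∃ m : X, dist L.q m = dist L.q (L.h n • L.y) / 2 ∧
      dist m (L.h n • L.y) = dist L.q (L.h n • L.y) / 2 := fun n => exists_midpoint hgeo _ _
  choose m hm1 hm2 using hmid
  have hmq : ∀ n, dist (m n) L.q ≤ L.R / 2 := by
    intro n
    rw [dist_comm, hm1]
    have hb := L.hball n
    rw [dist_comm] at hb
    linarith
  have hmp : ∀ n, dist (m n) (L.h n • L.y) ≤ L.R / 2 := by
    intro n
    rw [hm2]
    have hb := L.hball n
    rw [dist_comm] at hb
    linarith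
  have hcov' : ∀ n, ∃ c : G, ∃ κ ∈ K₀, m n = c • κ := fun n => hcov (m n)
  choose c κ hκmem hκeq using hcov'
  obtain ⟨κs, hκsmem, φ, hφmono, hφtend⟩ := hK₀c.tendsto_subseq hκmem
  rcases pigeonhole_subseq (c ∘ φ) with ⟨c0, hfib⟩ | ⟨ψ, hψmono, hψinj⟩
  · -- case (i): value c0 occurs infinitely often
    obtain ⟨e, hemono, hemem⟩ := exists_strictMono_mem hfib
    set ρ : ℕ → ℕ := fun k => φ (e k) with hρ
    have hρmono : StrictMono ρ := hφmono.comp hemono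
    have hc0 : ∀ k, c (ρ k) = c0 := fun k => hemem k
    set q' := c0 • κs with hq'
    have htend : Filter.Tendsto (fun k => m (ρ k)) Filter.atTop (nhds q') := by
      have h1 : Filter.Tendsto (fun k => κ (ρ k)) Filter.atTop (nhds κs) :=
        hφtend.comp hemono.tendsto_atTop
      have h2 := ((hGA.isometry c0).continuous.tendsto κs).comp h1
      refine h2.congr ?_
      intro k
      simp only [Function.comp_apply]
      rw [← hc0 k, ← hκeq (ρ k)]
    have hev : ∀ᶠ k in Filter.atTop, dist (m (ρ k)) q' < ξ :=
      (Metric.tendsto_nhds.1 htend) ξ hξ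
    obtain ⟨N, hN⟩ := Filter.eventually_atTop.1 hev
    refine ⟨⟨L.y, q', L.R/2 + ξ, fun k => L.h (ρ (k + N)), L.hy, ?_, ?_⟩, rfl⟩
    · intro n
      calc dist (L.h (ρ (n+N)) • L.y) q'
          ≤ dist (L.h (ρ (n+N)) • L.y) (m (ρ (n+N))) + dist (m (ρ (n+N))) q' :=
            dist_triangle _ _ _
        _ ≤ L.R/2 + ξ := by
            have h1 := hmp (ρ (n+N))
            rw [dist_comm] at h1
            have h2 := le_of_lt (hN (n+N) (by omega))
            linarith
    · have hidx : Function.Injective (fun k : ℕ => ρ (k + N)) := by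
        intro a b hab
        have := hρmono.injective hab
        omega
      intro a b hab
      exact hidx (L.hinj hab)
  · -- case (ii): injective subsequence of covering elements
    set ρ : ℕ → ℕ := fun k => φ (ψ k) with hρ
    have hcinj : Function.Injective (fun k => c (ρ k)) := hψinj
    have hκtend : Filter.Tendsto (fun k => κ (ρ k)) Filter.atTop (nhds κs) :=
      hφtend.comp hψmono.tendsto_atTop
    have hwq : ∀ k, dist (c (ρ k) • κs) L.q ≤ L.R/2 + dist (κ (ρ k)) κs := by
      intro k
      have h1 : dist (c (ρ k) • κs) (m (ρ k)) = dist (κ (ρ k)) κs := by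
        rw [hκeq (ρ k), dist_smul_eq hGA, dist_comm]
      calc dist (c (ρ k) • κs) L.q
          ≤ dist (c (ρ k) • κs) (m (ρ k)) + dist (m (ρ k)) L.q := dist_triangle _ _ _
        _ ≤ L.R/2 + dist (κ (ρ k)) κs := by
            rw [h1]
            have := hmq (ρ k)
            linarith
    have hev : ∀ᶠ k in Filter.atTop, dist (κ (ρ k)) κs < ξ := by
      have := Metric.tendsto_nhds.1 hκtend ξ hξ
      exact this
    obtain ⟨N, hN⟩ := Filter.eventually_atTop.1 hev
    rcases pigeonhole_subseq (fun k => c (ρ (k + N)) • κs) with ⟨w, hwfib⟩ | ⟨ψ', hψ'mono, hψ'inj⟩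
    · exfalso
      obtain ⟨e, hemono, hemem⟩ := exists_strictMono_mem hwfib
      refine stab_contra hGA (w := κs) (v := fun k => c (ρ (e k + N))) ?_ ?_
      · intro a b hab
        have h1 := hcinj hab
        have h2 : e a + N = e b + N := h1
        have := hemono.injective (by omega : e a = e b)
        exact this
      · intro k
        have h1 : c (ρ (e k + N)) • κs = w := hemem k
        have h2 : c (ρ (e 0 + N)) • κs = w := hemem 0
        rw [h1, h2]
    · refine ⟨⟨κs, L.q, L.R/2 + ξ, fun k => c (ρ (ψ' k + N)), hκsmem, ?_, ?_⟩, rfl⟩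
      · intro n
        have h1 := hwq (ψ' n + N)
        have h2 : dist (κ (ρ (ψ' n + N))) κs < ξ := hN _ (by omega)
        linarith
      · intro a b hab
        exact hψ'inj hab

end M3

section M4
variable {G X : Type*} [Group G] [MetricSpace X] [MulAction G X]

lemma cocompact_covering (hGA : IsGeometricAction G X) (x0 : X) :
    ∃ K₀ : Set X, IsCompact K₀ ∧ x0 ∈ K₀ ∧ (∀ x : X, ∃ c : G, ∃ κ ∈ K₀, x = c • κ) := by
  obtain ⟨K, hKc, hKcov⟩ := hGA.cocompact
  refine ⟨insert x0 K, hKc.insert x0, Set.mem_insert _ _, ?_⟩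
  intro x
  have hx : x ∈ ⋃ g : G, (fun x : X => g • x) '' K := by rw [hKcov]; trivial
  obtain ⟨c, hc⟩ := Set.mem_iUnion.1 hx
  obtain ⟨κ, hκ, rfl⟩ := hc
  exact ⟨c, κ, Set.mem_insert_of_mem _ hκ, rfl⟩

lemma finite_displacement (hGA : IsGeometricAction G X) (hgeo : IsGeodesicSpace X)
    (x0 : X) (M : ℝ) : {h : G | dist (h • x0) x0 ≤ M}.Finite := by
  classical
  rw [← Set.not_infinite]
  intro hI
  obtain ⟨K₀, hK₀c, hx0K₀, hcov⟩ := cocompact_covering hGA x0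
  set emb := Set.Infinite.natEmbedding _ hI with hemb
  set e0 : ℕ → G := fun n => (emb n : G) with he0
  have he0inj : Function.Injective e0 :=
    fun a b hab => emb.injective (Subtype.coe_injective hab)
  have he0mem : ∀ n, dist (e0 n • x0) x0 ≤ M := fun n => (emb n).2
  rcases pigeonhole_subseq (fun n => e0 n • x0) with ⟨w, hwfib⟩ | ⟨ψ, hψmono, hψinj⟩
  · obtain ⟨e, hemono, hemem⟩ := exists_strictMono_mem hwfib
    refine stab_contra hGA (w := x0) (v := fun k => e0 (e k))
      (he0inj.comp hemono.injective) ?_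
    intro k
    have h1 : e0 (e k) • x0 = w := hemem k
    have h2 : e0 (e 0) • x0 = w := hemem 0
    rw [h1, h2]
  · set L0 : LevelData G X K₀ := ⟨x0, x0, M, fun n => e0 (ψ n), hx0K₀,
      fun n => he0mem (ψ n), hψinj⟩ with hL0
    have hstep : ∀ (j : ℕ) (L : LevelData G X K₀), ∃ L' : LevelData G X K₀,
        L'.R = L.R / 2 + (1/4:ℝ)^j :=
      fun j L => L.step hGA hgeo hK₀c hcov (by positivity)
    set lds : ℕ → LevelData G X K₀ :=
      fun j => Nat.rec L0 (fun j L => Classical.choose (hstep j L)) j with hlds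
    have hR : ∀ j, (lds (j+1)).R = (lds j).R / 2 + (1/4:ℝ)^j :=
      fun j => Classical.choose_spec (hstep j (lds j))
    have hRb : ∀ j, (lds j).R ≤ (1/2:ℝ)^j * (lds 0).R + 4*((1/2:ℝ)^j - (1/4:ℝ)^j) := by
      intro j
      induction j with
      | zero => simp
      | succ k ih =>
        rw [hR k, pow_succ, pow_succ]
        nlinarith [ih]
    have hRlim : Filter.Tendsto (fun j => (lds j).R) Filter.atTop (nhds 0) := by
      refine squeeze_zero (fun j => (lds j).R_nonneg)
        (g := fun j => (1/2:ℝ)^j * ((lds 0).R + 4)) (fun j => ?_) ?_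
      · refine le_trans (hRb j) ?_
        have hp : (0:ℝ) ≤ (1/4:ℝ)^j := by positivity
        nlinarith
      · have := (tendsto_pow_atTop_nhds_zero_of_lt_one
          (by norm_num : (0:ℝ) ≤ 1/2) (by norm_num : (1/2:ℝ) < 1)).mul_const ((lds 0).R + 4)
        simpa using this
    obtain ⟨ys, _, σ, hσmono, hσtend⟩ := hK₀c.tendsto_subseq (fun j => (lds j).hy)
    have hT : ∀ mm : ℕ, {u : G | u ≠ 1 ∧ dist (u • ys) ys ≤ 1/((mm:ℝ)+1)}.Infinite := by
      intro mm
      have hpos : (0:ℝ) < 1/((mm:ℝ)+1) := by positivity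
      have h1 : Filter.Tendsto (fun k => (lds (σ k)).R) Filter.atTop (nhds 0) :=
        hRlim.comp hσmono.tendsto_atTop
      have h2 : Filter.Tendsto (fun k => dist ((lds (σ k)).y) ys) Filter.atTop (nhds 0) := by
        have hd := hσtend.dist (tendsto_const_nhds (x := ys))
        simpa using hd
      have h3 : Filter.Tendsto
          (fun k => 2*(lds (σ k)).R + 2*dist ((lds (σ k)).y) ys) Filter.atTop (nhds 0) := by
        have := (h1.const_mul 2).add (h2.const_mul 2)
        simpa using this
      obtain ⟨k, hk⟩ := (h3.eventually (gt_mem_nhds hpos)).exists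
      refine ((lds (σ k)).V_infinite hGA).mono ?_
      rintro u ⟨hne, hd⟩
      refine ⟨hne, ?_⟩
      have htri : dist (u • ys) ys ≤ dist (u • ys) (u • (lds (σ k)).y)
          + dist (u • (lds (σ k)).y) ((lds (σ k)).y) + dist ((lds (σ k)).y) ys :=
        dist_triangle4 _ _ _ _
      rw [dist_smul_eq hGA, dist_comm ys ((lds (σ k)).y)] at htri
      linarith
    obtain ⟨u, huinj, humem⟩ := exists_injective_seq_mem _ hT
    have hulim : Filter.Tendsto (fun mm => u mm • ys) Filter.atTop (nhds ys) := by
      rw [tendsto_iff_dist_tendsto_zero]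
      refine squeeze_zero (fun mm => dist_nonneg) (fun mm => (humem mm).2) ?_
      exact tendsto_one_div_add_atTop_nhds_zero_nat
    exact not_inj_tendsto_orbit hGA huinj hulim

lemma isCompact_closedBall' (hGA : IsGeometricAction G X) (hgeo : IsGeodesicSpace X)
    (x0 : X) (x : X) (r : ℝ) : IsCompact (Metric.closedBall x r) := by
  obtain ⟨K₀, hK₀c, hx0K₀, hcov⟩ := cocompact_covering hGA x0
  obtain ⟨D, hD⟩ : ∃ D : ℝ, ∀ κ ∈ K₀, dist κ x0 ≤ D := by
    obtain ⟨r0, hr0⟩ := hK₀c.isBounded.subset_closedBall x0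
    exact ⟨r0, fun κ hκ => hr0 hκ⟩
  have hball0 : ∀ s : ℝ, IsCompact (Metric.closedBall x0 s) := by
    intro s
    have hfin := finite_displacement hGA hgeo x0 (s + D)
    have hsub : Metric.closedBall x0 s ⊆
        ⋃ c ∈ {h : G | dist (h • x0) x0 ≤ s + D}, (fun z => c • z) '' K₀ := by
      intro z hz
      rw [Metric.mem_closedBall] at hz
      obtain ⟨c, κ, hκ, rfl⟩ := hcov z
      refine Set.mem_biUnion ?_ (Set.mem_image_of_mem _ hκ)
      have h1 : dist (c • x0) (c • κ) = dist x0 κ := dist_smul_eq hGA c x0 κ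
      have h2 : dist (c • x0) x0 ≤ dist (c • x0) (c • κ) + dist (c • κ) x0 :=
        dist_triangle _ _ _
      rw [h1] at h2
      have h3 : dist x0 κ ≤ D := by rw [dist_comm]; exact hD κ hκ
      exact le_trans h2 (by linarith)
    exact IsCompact.of_isClosed_subset
      (hfin.isCompact_biUnion (fun c _ => hK₀c.image (hGA.isometry c).continuous))
      Metric.isClosed_closedBall hsub
  refine IsCompact.of_isClosed_subset (hball0 (r + dist x x0)) Metric.isClosed_closedBall ?_
  intro z hz
  rw [Metric.mem_closedBall] at hz ⊢
  exact le_trans (dist_triangle z x x0) (by linarith)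

end M4

section M5
variable {G X : Type*} [Group G] [MetricSpace X] [MulAction G X]

lemma ray_dist {x0 : X} (β : Boundary X x0) {T : ℝ} (hT : 0 ≤ T) :
    dist x0 (β.1 T) = T := by
  have h := β.2.2 0 T le_rfl hT
  rw [β.2.1] at h
  rw [h, abs_of_nonpos (by linarith)]
  ring

lemma ray_geodesic {x0 : X} (β : Boundary X x0) {T : ℝ} (hT : 0 ≤ T) :
    IsGeodesicFromTo β.1 x0 (β.1 T) := by
  have hd : dist x0 (β.1 T) = T := ray_dist β hT
  refine ⟨β.2.1, by rw [hd], ?_⟩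
  intro s hs t ht
  rw [Set.mem_Icc, hd] at hs ht
  exact β.2.2 s t hs.1 ht.1

lemma smul_geodesic (hGA : IsGeometricAction G X) (g : G) {f : ℝ → X} {x y : X}
    (hf : IsGeodesicFromTo f x y) :
    IsGeodesicFromTo (fun s => g • f s) (g • x) (g • y) := by
  have hdd : dist (g • x) (g • y) = dist x y := dist_smul_eq hGA g x y
  refine ⟨by simp only [hf.1], ?_, ?_⟩
  · simp only [hdd, hf.2.1]
  · intro s hs t ht
    rw [Set.mem_Icc, hdd] at hs ht
    simp only []
    rw [dist_smul_eq hGA]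
    exact hf.2.2 s (Set.mem_Icc.2 hs) t (Set.mem_Icc.2 ht)

/-- Limit points of the centralizer are fixed by `g`. -/
lemma limit_mem_fixed (hGA : IsGeometricAction G X) (hCAT : IsCAT0Space X)
    (g : G) (x0 : X) (β : Boundary X x0) {a : ℕ → G}
    (hcomm : ∀ n, g * a n = a n * g)
    (htb : TendstoBoundary x0 (fun n => (a n) • x0) β) :
    AsymptoticMaps (fun t => g • β.1 t) β.1 := by
  refine ⟨dist (g • x0) x0, ?_⟩
  intro t ht
  have hged : ∀ n : ℕ, ∃ f : ℝ → X, IsGeodesicFromTo f x0 ((a n) • x0) :=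
    fun n => hCAT.1 _ _
  choose f hf using hged
  have hconv := htb.2 f hf t ht
  have hbd : ∀ n : ℕ, dist (g • (f n (min t (dist x0 ((a n) • x0)))))
      (f n (min t (dist x0 ((a n) • x0)))) ≤ dist (g • x0) x0 := by
    intro n
    set Ln := dist x0 ((a n) • x0) with hLn
    have hgf : IsGeodesicFromTo (fun s => g • f n s) (g • x0) (g • ((a n) • x0)) :=
      smul_geodesic hGA g (hf n)
    have hL : dist (g • x0) (g • ((a n) • x0)) = dist x0 ((a n) • x0) :=
      dist_smul_eq hGA g _ _
    have hsmem : min t Ln ∈ Set.Icc (0:ℝ) Ln := by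
      rw [Set.mem_Icc]
      exact ⟨le_min ht dist_nonneg, min_le_right _ _⟩
    have hb : dist x0 (g • x0) ≤ dist (g • x0) x0 := le_of_eq (dist_comm _ _)
    have hb' : dist ((a n) • x0) (g • ((a n) • x0)) ≤ dist (g • x0) x0 := by
      have hcsm : g • ((a n) • x0) = (a n) • (g • x0) := by
        rw [← mul_smul, ← mul_smul, hcomm n]
      rw [hcsm, dist_smul_eq hGA, dist_comm]
    have := cat0_convex' hCAT (hf n) hgf hL hsmem hb hb'
    rw [dist_comm] at this
    exact this
  have hA : Filter.Tendsto (fun n => g • (f n (min t (dist x0 ((a n) • x0)))))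
      Filter.atTop (nhds (g • β.1 t)) :=
    ((hGA.isometry g).continuous.tendsto _).comp hconv
  exact le_of_tendsto (hA.dist hconv) (Filter.Eventually.of_forall hbd)

end M5

section M6
variable {G X : Type*} [Group G] [MetricSpace X] [MulAction G X]

/-- Points fixed by `g` on the boundary are limits of the centralizer orbit. -/
lemma fixed_mem_limit (hGA : IsGeometricAction G X) (hCAT : IsCAT0Space X)
    (g : G) (x0 : X) (α : Boundary X x0)
    (hfix : AsymptoticMaps (fun t => g • α.1 t) α.1) :
    ∃ a : ℕ → G, (∀ n, g * a n = a n * g) ∧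
      TendstoBoundary x0 (fun n => (a n) • x0) α := by
  classical
  obtain ⟨Cg, hCg⟩ := hfix
  have hCg0 : 0 ≤ Cg := le_trans dist_nonneg (hCg 0 le_rfl)
  obtain ⟨K₀, hK₀c, hx0K₀, hcov⟩ := cocompact_covering hGA x0
  obtain ⟨D, hD0, hD⟩ : ∃ D : ℝ, 0 ≤ D ∧ ∀ κ ∈ K₀, dist x0 κ ≤ D := by
    obtain ⟨r0, hr0⟩ := hK₀c.isBounded.subset_closedBall x0
    refine ⟨max r0 0, le_max_right _ _, fun κ hκ => ?_⟩
    have := hr0 hκ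
    rw [Metric.mem_closedBall] at this
    rw [dist_comm]
    exact le_trans this (le_max_left _ _)
  -- covering elements along the ray
  have hbn : ∀ n : ℕ, ∃ b : G, dist (b • x0) (α.1 (n:ℝ)) ≤ D := by
    intro n
    obtain ⟨c, κ, hκ, heq⟩ := hcov (α.1 (n:ℝ))
    refine ⟨c, ?_⟩
    rw [heq, dist_smul_eq hGA]
    exact hD κ hκ
  choose b hb using hbn
  -- bounded displacement of the conjugates
  set M := 2*D + Cg with hM
  have hcn : ∀ n : ℕ, dist (((b n)⁻¹ * g * b n) • x0) x0 ≤ M := by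
    intro n
    have h1 : ((b n)⁻¹ * g * b n) • x0 = (b n)⁻¹ • (g • ((b n) • x0)) := by
      rw [← mul_smul, ← mul_smul]
    have h2 : dist ((b n)⁻¹ • (g • ((b n) • x0))) x0 = dist (g • ((b n) • x0)) ((b n) • x0) := by
      rw [← dist_smul_eq hGA (b n) ((b n)⁻¹ • (g • ((b n) • x0))) x0, smul_inv_smul]
    rw [h1, h2]
    have h3 : dist (g • ((b n) • x0)) ((b n) • x0)
        ≤ dist (g • ((b n) • x0)) (g • α.1 (n:ℝ)) + dist (g • α.1 (n:ℝ)) (α.1 (n:ℝ))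
          + dist (α.1 (n:ℝ)) ((b n) • x0) := dist_triangle4 _ _ _ _
    rw [dist_smul_eq hGA] at h3
    have h4 := hCg (n:ℝ) (Nat.cast_nonneg n)
    have h5 := hb n
    rw [dist_comm (α.1 (n:ℝ)) ((b n) • x0)] at h3
    linarith
  obtain ⟨c0, hfib⟩ := exists_infinite_fiber_of_finite (fun n => (b n)⁻¹ * g * b n)
      (finite_displacement hGA hCAT.1 x0 M) hcn
  obtain ⟨e, hemono, hemem⟩ := exists_strictMono_mem hfib
  set a : ℕ → G := fun k => b (e k) * (b (e 0))⁻¹ with ha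
  have hacomm : ∀ k, g * a k = a k * g := by
    intro k
    have h1 : (b (e k))⁻¹ * g * b (e k) = c0 := hemem k
    have h2 : (b (e 0))⁻¹ * g * b (e 0) = c0 := hemem 0
    have h3 : g * b (e k) = b (e k) * c0 := by
      have := congrArg (fun u => b (e k) * u) h1
      simpa [mul_assoc] using this
    have h4 : g * b (e 0) = b (e 0) * c0 := by
      have := congrArg (fun u => b (e 0) * u) h2
      simpa [mul_assoc] using this
    rw [ha]
    simp only []
    have h5 : c0 * (b (e 0))⁻¹ = (b (e 0))⁻¹ * g := by
      have := congrArg (fun u => u * (b (e 0))⁻¹) h4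
      have h6 := congrArg (fun u => (b (e 0))⁻¹ * u) this
      simpa [mul_assoc] using h6.symm
    calc g * (b (e k) * (b (e 0))⁻¹) = (g * b (e k)) * (b (e 0))⁻¹ := by rw [mul_assoc]
      _ = (b (e k) * c0) * (b (e 0))⁻¹ := by rw [h3]
      _ = b (e k) * (c0 * (b (e 0))⁻¹) := by rw [mul_assoc]
      _ = b (e k) * ((b (e 0))⁻¹ * g) := by rw [h5]
      _ = (b (e k) * (b (e 0))⁻¹) * g := by rw [mul_assoc]
  -- distance from a k • x0 to the ray point
  set E := dist ((b (e 0))⁻¹ • x0) x0 + D with hE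
  have hE0 : 0 ≤ E := by
    rw [hE]; exact add_nonneg dist_nonneg hD0
  have haE : ∀ k, dist ((a k) • x0) (α.1 ((e k : ℕ):ℝ)) ≤ E := by
    intro k
    have h1 : (a k) • x0 = (b (e k)) • ((b (e 0))⁻¹ • x0) := by
      rw [ha]; simp only []; rw [mul_smul]
    calc dist ((a k) • x0) (α.1 ((e k : ℕ):ℝ))
        ≤ dist ((a k) • x0) ((b (e k)) • x0) + dist ((b (e k)) • x0) (α.1 ((e k : ℕ):ℝ)) :=
          dist_triangle _ _ _
      _ ≤ E := by
          rw [h1, dist_smul_eq hGA]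
          have := hb (e k)
          rw [hE]
          linarith
  -- lower bound on the distances
  have haLge : ∀ k : ℕ, (k:ℝ) - E ≤ dist x0 ((a k) • x0) := by
    intro k
    have h1 : dist x0 (α.1 ((e k : ℕ):ℝ)) = ((e k : ℕ):ℝ) :=
      ray_dist α (Nat.cast_nonneg _)
    have h2 : dist x0 (α.1 ((e k : ℕ):ℝ))
        ≤ dist x0 ((a k) • x0) + dist ((a k) • x0) (α.1 ((e k : ℕ):ℝ)) := dist_triangle _ _ _
    have h3 : (k:ℝ) ≤ ((e k : ℕ):ℝ) := Nat.cast_le.2 hemono.le_apply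
    have h4 := haE k
    linarith
  refine ⟨a, hacomm, ?_, ?_⟩
  · -- distances tend to infinity
    refine Filter.tendsto_atTop_mono haLge ?_
    have h1 : Filter.Tendsto (fun k : ℕ => (k:ℝ)) Filter.atTop Filter.atTop :=
      tendsto_natCast_atTop_atTop
    exact Filter.tendsto_atTop_add_const_right _ (-E) h1
  · -- pointwise convergence of geodesic segments
    intro f hf t ht
    rw [tendsto_iff_dist_tendsto_zero]
    have hbound : ∀ᶠ k : ℕ in Filter.atTop,
        dist (f k (min t (dist x0 ((a k) • x0)))) (α.1 t) ≤ (2*t*E + 1) * (1/(k:ℝ)) := by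
      have hev : ∀ᶠ k : ℕ in Filter.atTop, t + E + 1 ≤ (k:ℝ) :=
        tendsto_natCast_atTop_atTop.eventually_ge_atTop (t + E + 1)
      filter_upwards [hev, Filter.eventually_ge_atTop 1] with k hk hk1
      set Nk : ℝ := ((e k : ℕ):ℝ) with hNk
      set Lk : ℝ := dist x0 ((a k) • x0) with hLk
      have hkN : (k:ℝ) ≤ Nk := Nat.cast_le.2 hemono.le_apply
      have hNpos : (0:ℝ) < Nk := by linarith [hCg0, hE0]
      have hdα : dist x0 (α.1 Nk) = Nk := ray_dist α (le_of_lt hNpos)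
      have hLge : Nk - E ≤ Lk := by
        have h2 : dist x0 (α.1 Nk) ≤ Lk + dist ((a k) • x0) (α.1 Nk) := by
          rw [hLk]; exact dist_triangle _ _ _
        have h4 := haE k
        rw [hdα] at h2
        linarith
      have hLle : Lk ≤ Nk + E := by
        have h2 : Lk ≤ dist x0 (α.1 Nk) + dist (α.1 Nk) ((a k) • x0) := dist_triangle _ _ _
        have h4 := haE k
        rw [hdα, dist_comm (α.1 Nk) ((a k) • x0)] at h2
        linarith
      set τ : ℝ := t / Nk with hτ
      have hτIcc : τ ∈ Set.Icc (0:ℝ) 1 := by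
        rw [Set.mem_Icc]
        constructor
        · exact div_nonneg ht (le_of_lt hNpos)
        · rw [div_le_one hNpos]; linarith
      have hτN : τ * Nk = t := div_mul_cancel₀ t (ne_of_gt hNpos)
      -- same-start comparison
      have h1 : dist (f k (τ * Lk)) (α.1 t) ≤ τ * E := by
        have hcmp := cat0_convex_same_start hCAT (hf k) (ray_geodesic α (le_of_lt hNpos)) hτIcc
        rw [hdα, hτN] at hcmp
        have hbd : dist ((a k) • x0) (α.1 Nk) ≤ E := haE k
        calc dist (f k (τ * Lk)) (α.1 t) = dist (f k (τ * dist x0 ((a k) • x0))) (α.1 t) := rfl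
          _ ≤ τ * dist ((a k) • x0) (α.1 Nk) := hcmp
          _ ≤ τ * E := mul_le_mul_of_nonneg_left hbd hτIcc.1
      -- parameter adjustment
      have hmin : min t Lk = t := min_eq_left (by linarith)
      have h2 : dist (f k (min t Lk)) (f k (τ * Lk)) = |min t Lk - τ * Lk| := by
        refine (hf k).2.2 _ ?_ _ ?_
        · rw [Set.mem_Icc, hmin]
          exact ⟨ht, by linarith⟩
        · rw [Set.mem_Icc]
          constructor
          · exact mul_nonneg hτIcc.1 dist_nonneg
          · calc τ * Lk ≤ 1 * Lk := mul_le_mul_of_nonneg_right hτIcc.2 dist_nonneg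
              _ = Lk := one_mul _
      have h3 : |min t Lk - τ * Lk| ≤ τ * E := by
        rw [hmin]
        have heq : t - τ * Lk = τ * (Nk - Lk) := by
          rw [mul_sub, hτN]
        rw [heq, abs_mul, abs_of_nonneg hτIcc.1]
        refine mul_le_mul_of_nonneg_left ?_ hτIcc.1
        rw [abs_le]
        constructor <;> linarith
      have h4 : τ * E ≤ t * E / (k:ℝ) := by
        rw [hτ, div_mul_eq_mul_div, div_le_div_iff₀ hNpos (by linarith : (0:ℝ) < (k:ℝ))]
        have : t * E * (k:ℝ) ≤ t * E * Nk := by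
          refine mul_le_mul_of_nonneg_left hkN (mul_nonneg ht hE0)
        linarith
      calc dist (f k (min t Lk)) (α.1 t)
          ≤ dist (f k (min t Lk)) (f k (τ * Lk)) + dist (f k (τ * Lk)) (α.1 t) :=
            dist_triangle _ _ _
        _ ≤ τ * E + τ * E := by rw [h2]; exact add_le_add h3 h1
        _ ≤ (2*t*E + 1) * (1/(k:ℝ)) := by
            have h6 : (0:ℝ) < (k:ℝ) := by linarith
            have h7 : τ * E + τ * E ≤ 2 * (t * E / (k:ℝ)) := by linarith
            have h8 : 2 * (t * E / (k:ℝ)) = (2*t*E) * (1/(k:ℝ)) := by ring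
            have h9 : (2*t*E) * (1/(k:ℝ)) ≤ (2*t*E + 1) * (1/(k:ℝ)) := by
              refine mul_le_mul_of_nonneg_right (by linarith) ?_
              positivity
            linarith
    refine squeeze_zero' (Filter.Eventually.of_forall (fun k => dist_nonneg)) hbound ?_
    have := tendsto_one_div_atTop_nhds_zero_nat.const_mul (2*t*E + 1)
    simpa using this

end M6

section M7
variable {G X : Type*} [Group G] [MetricSpace X] [MulAction G X]

lemma exists_fixed_of_infinite (hGA : IsGeometricAction G X) (hCAT : IsCAT0Space X)
    (g : G) (x0 : X) (hinf : {h : G | g * h = h * g}.Infinite) :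
    ∃ α : Boundary X x0, AsymptoticMaps (fun t => g • α.1 t) α.1 := by
  classical
  -- select centralizer elements with large displacement
  have hsel : ∀ n : ℕ, ∃ a : G, (g * a = a * g) ∧ (n:ℝ) < dist x0 (a • x0) := by
    intro n
    by_contra hcon
    push_neg at hcon
    refine Set.not_infinite.2 ((finite_displacement hGA hCAT.1 x0 (n:ℝ)).subset ?_) hinf
    intro h hh
    have := hcon h hh
    rw [Set.mem_setOf_eq, dist_comm]
    exact this
  choose a hacomm haL using hsel
  -- geodesics to the orbit points
  have hged : ∀ n : ℕ, ∃ f : ℝ → X, IsGeodesicFromTo f x0 ((a n) • x0) :=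
    fun n => hCAT.1 _ _
  choose f hf using hged
  set L : ℕ → ℝ := fun n => dist x0 ((a n) • x0) with hLdef
  have hL0 : ∀ n, 0 ≤ L n := fun n => dist_nonneg
  -- clamped geodesics
  set gs : ℕ → ℝ → X := fun n t => f n (min t (L n)) with hgs
  have hgmem : ∀ (n : ℕ) (t : ℝ), 0 ≤ t → min t (L n) ∈ Set.Icc (0:ℝ) (L n) :=
    fun n t ht => Set.mem_Icc.2 ⟨le_min ht (hL0 n), min_le_right _ _⟩
  have hgdist : ∀ (n : ℕ) (t : ℝ), 0 ≤ t → dist x0 (gs n t) = min t (L n) :=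
    fun n t ht => geodesic_dist_left (hf n) (hgmem n t ht)
  have hgball : ∀ (n : ℕ) (t : ℝ), 0 ≤ t → gs n t ∈ Metric.closedBall x0 t := by
    intro n t ht
    rw [Metric.mem_closedBall, dist_comm, hgdist n t ht]
    exact min_le_left _ _
  have hgseg : ∀ (n : ℕ) (s t : ℝ), 0 ≤ s → 0 ≤ t →
      dist (gs n s) (gs n t) = |min s (L n) - min t (L n)| :=
    fun n s t hs ht => (hf n).2.2 _ (hgmem n s hs) _ (hgmem n t ht)
  have hglip : ∀ (n : ℕ) (s t : ℝ), 0 ≤ s → 0 ≤ t →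
      dist (gs n s) (gs n t) ≤ |s - t| := by
    intro n s t hs ht
    rw [hgseg n s t hs ht]
    rcases le_total s t with hst | hst
    · rw [abs_of_nonpos (by simp only [sub_nonpos]; exact min_le_min hst le_rfl),
        abs_of_nonpos (by linarith)]
      rcases le_total t (L n) with h1 | h1
      · rw [min_eq_left (le_trans hst h1), min_eq_left h1]
      · rw [min_eq_right h1]
        rcases le_total s (L n) with h2 | h2
        · rw [min_eq_left h2]; linarith
        · rw [min_eq_right h2]; linarith
    · rw [abs_of_nonneg (by simp only [sub_nonneg]; exact min_le_min hst le_rfl),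
        abs_of_nonneg (by linarith)]
      rcases le_total s (L n) with h1 | h1
      · rw [min_eq_left h1, min_eq_left (le_trans hst h1)]
      · rw [min_eq_right h1]
        rcases le_total t (L n) with h2 | h2
        · rw [min_eq_left h2]; linarith
        · rw [min_eq_right h2]; linarith
  -- extraction in the countable product
  set S : Set (∀ _ : ℚ, X) :=
    Set.pi Set.univ (fun q : ℚ => Metric.closedBall x0 (max (q:ℝ) 0)) with hS
  have hScomp : IsCompact S :=
    isCompact_univ_pi (fun q => isCompact_closedBall' hGA hCAT.1 x0 x0 _)
  set u : ℕ → (∀ _ : ℚ, X) := fun n q => gs n (max (q:ℝ) 0) with hu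
  have humem : ∀ n, u n ∈ S := by
    intro n
    rw [hS, Set.mem_univ_pi]
    intro q
    exact hgball n _ (le_max_right _ _)
  obtain ⟨v, hvS, φ, hφmono, hφtend⟩ := hScomp.tendsto_subseq humem
  have hq : ∀ q : ℚ, Filter.Tendsto (fun k => gs (φ k) (max (q:ℝ) 0))
      Filter.atTop (nhds (v q)) := by
    intro q
    exact (tendsto_pi_nhds.1 hφtend) q
  -- limits at all real times
  have hconv : ∀ t : ℝ, 0 ≤ t → ∃ z, z ∈ Metric.closedBall x0 t ∧
      Filter.Tendsto (fun k => gs (φ k) t) Filter.atTop (nhds z) := by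
    intro t ht
    have hcauchy : CauchySeq (fun k => gs (φ k) t) := by
      rw [Metric.cauchySeq_iff]
      intro ε hε
      obtain ⟨q, hq1, hq2⟩ := exists_rat_btwn (show t < t + ε/4 by linarith)
      have hq0 : (0:ℝ) ≤ (q:ℝ) := le_trans ht (le_of_lt hq1)
      have hmax : max (q:ℝ) 0 = (q:ℝ) := max_eq_left hq0
      have hc := (hq q).cauchySeq
      rw [Metric.cauchySeq_iff] at hc
      obtain ⟨N, hN⟩ := hc (ε/2) (by linarith)
      refine ⟨N, fun m hm n hn => ?_⟩
      have h1 : dist (gs (φ m) t) (gs (φ m) (max (q:ℝ) 0)) ≤ |t - (q:ℝ)| := by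
        rw [hmax]
        exact hglip (φ m) t (q:ℝ) ht hq0
      have h2 : dist (gs (φ n) t) (gs (φ n) (max (q:ℝ) 0)) ≤ |t - (q:ℝ)| := by
        rw [hmax]
        exact hglip (φ n) t (q:ℝ) ht hq0
      have h3 := hN m hm n hn
      have h4 : |t - (q:ℝ)| ≤ ε/4 := by
        rw [abs_of_nonpos (by linarith)]
        linarith
      calc dist (gs (φ m) t) (gs (φ n) t)
          ≤ dist (gs (φ m) t) (gs (φ m) (max (q:ℝ) 0))
            + dist (gs (φ m) (max (q:ℝ) 0)) (gs (φ n) (max (q:ℝ) 0))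
            + dist (gs (φ n) (max (q:ℝ) 0)) (gs (φ n) t) := dist_triangle4 _ _ _ _
        _ < ε := by
            rw [dist_comm (gs (φ n) (max (q:ℝ) 0)) (gs (φ n) t)]
            have h3' : dist (u (φ m) q) (u (φ n) q) < ε/2 := h3
            have h3'' : dist (gs (φ m) (max (q:ℝ) 0)) (gs (φ n) (max (q:ℝ) 0)) < ε/2 := h3'
            linarith
    obtain ⟨z, hz1, hz2⟩ := cauchySeq_tendsto_of_isComplete
      ((isCompact_closedBall' hGA hCAT.1 x0 x0 t).isComplete)
      (fun k => hgball (φ k) t ht) hcauchy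
    exact ⟨z, hz1, hz2⟩
  choose z hz1 hz2 using hconv
  set ξ : ℝ → X := fun t => if ht : 0 ≤ t then z t ht else x0 with hξ
  have hξconv : ∀ (t : ℝ) (ht : 0 ≤ t),
      Filter.Tendsto (fun k => gs (φ k) t) Filter.atTop (nhds (ξ t)) := by
    intro t ht
    rw [hξ]
    simp only [dif_pos ht]
    exact hz2 t ht
  -- eventually the clamping is inactive
  have hLφ : ∀ k : ℕ, (k:ℝ) < L (φ k) := by
    intro k
    have h1 : (k:ℝ) ≤ (φ k : ℝ) := Nat.cast_le.2 hφmono.le_apply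
    exact lt_of_le_of_lt h1 (haL (φ k))
  have hminev : ∀ (t : ℝ), 0 ≤ t → ∀ᶠ k : ℕ in Filter.atTop, min t (L (φ k)) = t := by
    intro t ht
    filter_upwards [tendsto_natCast_atTop_atTop.eventually_ge_atTop t] with k hk
    exact min_eq_left (le_of_lt (lt_of_le_of_lt hk (hLφ k)))
  -- ray properties
  have hξ0 : ξ 0 = x0 := by
    have h1 : ∀ k : ℕ, gs (φ k) 0 = x0 := by
      intro k
      have : min (0:ℝ) (L (φ k)) = 0 := min_eq_left (hL0 _)
      rw [hgs]
      simp only [this]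
      exact (hf (φ k)).1
    have h2 := hξconv 0 le_rfl
    have h3 : Filter.Tendsto (fun k : ℕ => gs (φ k) 0) Filter.atTop (nhds x0) := by
      refine Filter.Tendsto.congr (fun k => (h1 k).symm) tendsto_const_nhds
    exact (tendsto_nhds_unique h2 h3).symm ▸ rfl
  have hray : ∀ s t : ℝ, 0 ≤ s → 0 ≤ t → dist (ξ s) (ξ t) = |s - t| := by
    intro s t hs ht
    have h1 := (hξconv s hs).dist (hξconv t ht)
    have h2 : ∀ᶠ k : ℕ in Filter.atTop,
        dist (gs (φ k) s) (gs (φ k) t) = |s - t| := by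
      filter_upwards [hminev s hs, hminev t ht] with k hks hkt
      rw [hgseg (φ k) s t hs ht, hks, hkt]
    have h3 : Filter.Tendsto (fun k => dist (gs (φ k) s) (gs (φ k) t))
        Filter.atTop (nhds (|s - t|)) :=
      Filter.Tendsto.congr' (Filter.EventuallyEq.symm h2) tendsto_const_nhds
    exact tendsto_nhds_unique h1 h3
  set α : Boundary X x0 := ⟨ξ, hξ0, hray⟩ with hα
  refine ⟨α, ?_⟩
  -- α is a limit of the centralizer orbit, hence fixed
  have htb : TendstoBoundary x0 (fun k => (a (φ k)) • x0) α := by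
    constructor
    · refine Filter.tendsto_atTop_mono (fun k => le_of_lt (hLφ k)) tendsto_natCast_atTop_atTop
    · intro f' hf' t ht
      have heq : ∀ k, f' k (min t (dist x0 ((a (φ k)) • x0))) = gs (φ k) t := by
        intro k
        rw [hgs]
        exact cat0_geodesic_unique hCAT (hf' k) (hf (φ k)) (hgmem (φ k) t ht)
      exact (hξconv t ht).congr (fun k => (heq k).symm)
  exact limit_mem_fixed hGA hCAT g x0 α (fun k => hacomm (φ k)) htb

end M7

/-- Theorem 2: if `G` acts geometrically on a CAT(0) space `X`, then for every `g ∈ G`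
the fixed-point set `ℱ_g = {α ∈ ∂X : gα = α}` equals the limit set `L(Z_g)` of the
centralizer `Z_g`; moreover `ℱ_g = ∅` if and only if `Z_g` is finite.
Here `α ∈ ∂X` is fixed by `g` iff `g ∘ ξ_α` is asymptotic to `ξ_α`, and `β ∈ L(A)` iff
some sequence in the orbit `A·x0` converges to `β` in the cone topology. -/
theorem boundary_fixed_set_eq_limit_set_of_centralizer
    {G X : Type*} [Group G] [MetricSpace X] [MulAction G X]
    (hGA : IsGeometricAction G X) (hCAT : IsCAT0Space X) (g : G) (x0 : X) :
    ({α : Boundary X x0 | AsymptoticMaps (fun t => g • α.1 t) α.1} =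
      {β : Boundary X x0 | ∃ a : ℕ → G, (∀ n, a n ∈ {h : G | g * h = h * g}) ∧
        TendstoBoundary x0 (fun n => (a n) • x0) β}) ∧
    ({α : Boundary X x0 | AsymptoticMaps (fun t => g • α.1 t) α.1} = ∅ ↔
      {h : G | g * h = h * g}.Finite) := by
  constructor
  · ext β
    simp only [Set.mem_setOf_eq]
    constructor
    · intro hfix
      obtain ⟨a, hc, htb⟩ := fixed_mem_limit hGA hCAT g x0 β hfix
      exact ⟨a, fun n => hc n, htb⟩
    · rintro ⟨a, hc, htb⟩
      exact limit_mem_fixed hGA hCAT g x0 β (fun n => hc n) htb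
  · constructor
    · intro hempty
      by_contra hfin
      have hinf : {h : G | g * h = h * g}.Infinite := hfin
      obtain ⟨α, hα⟩ := exists_fixed_of_infinite hGA hCAT g x0 hinf
      rw [Set.eq_empty_iff_forall_notMem] at hempty
      exact hempty α hα
    · intro hfin
      rw [Set.eq_empty_iff_forall_notMem]
      intro α hα
      obtain ⟨a, hc, htb⟩ := fixed_mem_limit hGA hCAT g x0 α hα
      obtain ⟨B, hB⟩ : ∃ B : ℝ, ∀ h ∈ {h : G | g * h = h * g}, dist x0 (h • x0) ≤ B := by
        have himg : ((fun h : G => dist x0 (h • x0)) '' {h | g * h = h * g}).Finite :=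
          hfin.image _
        rcases Set.eq_empty_or_nonempty {h : G | g * h = h * g} with he | hne
        · exact ⟨0, fun h hh => absurd (he ▸ hh) (Set.notMem_empty h)⟩
        · obtain ⟨B, hB⟩ := himg.bddAbove
          exact ⟨B, fun h hh => hB (Set.mem_image_of_mem _ hh)⟩
      obtain ⟨n, hn⟩ := (htb.1.eventually_gt_atTop B).exists
      exact absurd (hB (a n) (hc n)) (not_le.2 hn)
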